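/- In the strategy that repeatedly augments a maximal flow f by a negative-weight residual cycle (with respect to the distance d(·, f') to a fixed reference maximal flow f'), the process terminates after at most d(f₀, f') ≤ 2ρ_N P iterations and terminates at a maximal flow f* minimizing d(·, f') over all maximal flows. -/

import Mathlib

open Finset

variable {V : Type*} [Fintype V] [DecidableEq V]

/-- An integral (nonnegative) flow with source `s`, sink `t`, capacities `c`. -/
def IsZFlow (c : V → V → ℤ) (s t : V) (f : V → V → ℤ) : Prop :=
  (∀ u v, 0 ≤ f u v) ∧ (∀ u v, f u v ≤ c u v) ∧
    ∀ v, v ≠ s → v ≠ t → ∑ u, f v u = ∑ u, f u v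

/-- The value of a flow: net flow out of the source. -/
def zvalue (f : V → V → ℤ) (s : V) : ℤ := ∑ u, f s u - ∑ u, f u s

/-- A maximal flow. -/
def IsZMaxFlow (c : V → V → ℤ) (s t : V) (f : V → V → ℤ) : Prop :=
  IsZFlow c s t f ∧ ∀ g, IsZFlow c s t g → zvalue g s ≤ zvalue f s

/-- Push one unit of flow along one residual step `(a, b, dir)`:
a residual arc from `a` to `b`; if `dir = true` it is a forward copy of the
arc `(a,b)` (flow increases by 1), otherwise it is the backward copy of the
arc `(b,a)` (flow decreases by 1). -/
def push1 (f : V → V → ℤ) (e : V × V × Bool) : V → V → ℤ :=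
  fun u v =>
    if e.2.2 then (if u = e.1 ∧ v = e.2.1 then f u v + 1 else f u v)
    else (if u = e.2.1 ∧ v = e.1 then f u v - 1 else f u v)

/-- Push one unit of flow along a residual cycle. -/
def push (f : V → V → ℤ) (g : List (V × V × Bool)) : V → V → ℤ :=
  g.foldl push1 f

/-- `g` is a simple cycle in the residual graph `G_f`: a nonempty list of
residual steps, with pairwise distinct start vertices, cyclically chained,
where forward steps use unsaturated arcs and backward steps use arcs
carrying positive flow. -/
def ResidualCycle (c f : V → V → ℤ) (g : List (V × V × Bool)) : Prop :=
  g ≠ [] ∧ (g.map fun e => e.1).Nodup ∧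
    (∀ i : Fin g.length,
      (g.get i).2.1 = (g.get ⟨((i : ℕ) + 1) % g.length, Nat.mod_lt _ i.pos⟩).1) ∧
    ∀ e ∈ g, if e.2.2 then f e.1 e.2.1 < c e.1 e.2.1 else 0 < f e.2.1 e.1

/-- The underlying arc of a residual step. -/
def arcOf (e : V × V × Bool) : V × V := if e.2.2 then (e.1, e.2.1) else (e.2.1, e.1)

/-- The weight of a residual cycle relative to the reference flow `fp`:
`-1` on steps over arcs of `X` where `f` and `fp` differ, `+1` on steps over
arcs of `X` where they agree, `0` elsewhere. -/
def cycleWeight (X : Finset (V × V)) (f fp : V → V → ℤ) (g : List (V × V × Bool)) : ℤ :=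
  (g.map fun e =>
    if arcOf e ∈ X then
      (if f (arcOf e).1 (arcOf e).2 ≠ fp (arcOf e).1 (arcOf e).2 then (-1 : ℤ) else 1)
    else 0).sum

/-- The transfer distance: number of arcs of `X` where the two flows differ. -/
def dist (X : Finset (V × V)) (f fp : V → V → ℤ) : ℕ :=
  (X.filter fun e => f e.1 e.2 ≠ fp e.1 e.2).card

def contrib (u v : V) (e : V × V × Bool) : ℤ :=
  (if e = (u, v, true) then 1 else 0) - (if e = (v, u, false) then 1 else 0)

lemma push1_eq (f : V → V → ℤ) (e : V × V × Bool) (u v : V) :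
    push1 f e u v = f u v + contrib u v e := by
  rcases e with ⟨a, b, bl⟩
  cases bl <;> simp [push1, contrib, Prod.ext_iff] <;> split_ifs <;> simp_all <;> ring

lemma push_eq (g : List (V × V × Bool)) (f : V → V → ℤ) (u v : V) :
    push f g u v = f u v + (g.map (contrib u v)).sum := by
  induction g generalizing f with
  | nil => simp [push]
  | cons e g ih =>
    show push (push1 f e) g u v = _
    rw [ih, push1_eq]; simp; ring

def cnt {α : Type*} [DecidableEq α] (g : List α) (x : α) : ℤ :=
  (g.map (fun e => if e = x then (1:ℤ) else 0)).sum

lemma cnt_nonneg {α : Type*} [DecidableEq α] (g : List α) (x : α) : 0 ≤ cnt g x := by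
  induction g with
  | nil => simp [cnt]
  | cons a g ih => by_cases h : a = x <;> simp [cnt, h] at * <;> linarith

lemma cnt_eq_zero {α : Type*} [DecidableEq α] {g : List α} {x : α} (h : x ∉ g) :
    cnt g x = 0 := by
  induction g with
  | nil => simp [cnt]
  | cons a g ih =>
    simp at h
    simp [cnt, Ne.symm h.1] at *
    exact ih h.2

lemma cnt_eq_one {α : Type*} [DecidableEq α] {g : List α} {x : α} (hn : g.Nodup)
    (h : x ∈ g) : cnt g x = 1 := by
  induction g with
  | nil => simp at h
  | cons a g ih =>
    simp at h hn
    rcases h with h | h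
    · subst h
      have := cnt_eq_zero (g := g) (x := x) hn.1
      simp [cnt] at *
      linarith
    · have hax : ¬ a = x := by rintro rfl; exact hn.1 h
      have := ih hn.2 h
      simp [cnt, hax] at *
      linarith

lemma cnt_rotate {α : Type*} [DecidableEq α] (g : List α) (n : ℕ) (x : α) :
    cnt (g.rotate n) x = cnt g x := ((g.rotate_perm n).map _).sum_eq

lemma map_contrib_sum (g : List (V × V × Bool)) (u v : V) :
    (g.map (contrib u v)).sum = cnt g (u, v, true) - cnt g (v, u, false) := by
  induction g with
  | nil => simp [cnt]
  | cons a g ih => simp [contrib, cnt] at *; rw [ih]; ring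

lemma elem_excess (e : V × V × Bool) (v : V) :
    (∑ u, contrib v u e) - (∑ u, contrib u v e)
      = (if e.1 = v then (1:ℤ) else 0) - (if e.2.1 = v then 1 else 0) := by
  rcases e with ⟨a, b, bl⟩
  cases bl <;>
    simp [contrib, Prod.ext_iff, Finset.sum_sub_distrib, Finset.sum_ite_eq,
      Finset.sum_ite_eq', eq_comm, and_comm] <;>
    split_ifs <;> simp_all [Finset.filter_eq]

lemma excess_push (g : List (V × V × Bool)) (f : V → V → ℤ) (v : V)
    (hrot : g.map (fun e => e.2.1) = (g.map (fun e => e.1)).rotate 1) :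
    (∑ u, push f g v u) - (∑ u, push f g u v) = (∑ u, f v u) - (∑ u, f u v) := by
  have key : ∀ h : List (V × V × Bool),
      (∑ u, (h.map (contrib v u)).sum) - (∑ u, (h.map (contrib u v)).sum)
      = cnt (h.map (fun e => e.1)) v - cnt (h.map (fun e => e.2.1)) v := by
    intro h
    induction h with
    | nil => simp [cnt]
    | cons e h ih =>
      simp only [List.map_cons, List.sum_cons, Finset.sum_add_distrib, cnt] at *
      have := elem_excess e v
      split_ifs at * <;> linarith
  have hc : cnt (g.map (fun e => e.1)) v = cnt (g.map (fun e => e.2.1)) v := by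
    rw [hrot, cnt_rotate]
  simp only [push_eq, Finset.sum_add_distrib]
  have := key g
  rw [hc] at this
  linarith

lemma rc_rot {c f : V → V → ℤ} {g : List (V × V × Bool)} (h : ResidualCycle c f g) :
    g.map (fun e => e.2.1) = (g.map (fun e => e.1)).rotate 1 := by
  apply List.ext_get
  · simp
  · intro i h1 h2
    simp only [List.get_eq_getElem, List.getElem_map, List.getElem_rotate]
    have := h.2.2.1 ⟨i, by simpa using h1⟩; simp only [List.get_eq_getElem] at this; rw [this]
    congr 1 <;> simp

lemma cnt_ite {α : Type*} [DecidableEq α] {g : List α} (hn : g.Nodup) (x : α) :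
    cnt g x = if x ∈ g then 1 else 0 := by
  split_ifs with h
  · exact cnt_eq_one hn h
  · exact cnt_eq_zero h

lemma flow_push {c f : V → V → ℤ} {s t : V} {g : List (V × V × Bool)}
    (hf : IsZFlow c s t f) (hg : ResidualCycle c f g) :
    IsZFlow c s t (push f g) ∧ zvalue (push f g) s = zvalue f s := by
  have hnd : g.Nodup := hg.2.1.of_map
  have hbd : ∀ u v, 0 ≤ push f g u v ∧ push f g u v ≤ c u v := by
    intro u v
    rw [push_eq, map_contrib_sum, cnt_ite hnd, cnt_ite hnd]
    have h0 := hf.1 u v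
    have hc := hf.2.1 u v
    by_cases h1 : (u, v, true) ∈ g
    · have := hg.2.2.2 _ h1
      simp at this
      by_cases h2 : (v, u, false) ∈ g <;> simp [h1, h2] <;> omega
    · by_cases h2 : (v, u, false) ∈ g
      · have := hg.2.2.2 _ h2
        simp at this
        simp [h1, h2]; omega
      · simp [h1, h2]; omega
  refine ⟨⟨fun u v => (hbd u v).1, fun u v => (hbd u v).2, fun v hs ht => ?_⟩, ?_⟩
  · have := excess_push g f v (rc_rot hg)
    have := hf.2.2 v hs ht
    linarith
  · exact excess_push g f s (rc_rot hg)

lemma max_push {c f : V → V → ℤ} {s t : V} {g : List (V × V × Bool)}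
    (hf : IsZMaxFlow c s t f) (hg : ResidualCycle c f g) :
    IsZMaxFlow c s t (push f g) := by
  obtain ⟨h1, h2⟩ := flow_push hf.1 hg
  exact ⟨h1, fun g' hg' => h2 ▸ hf.2 g' hg'⟩

lemma swap_sum {α β : Type*} (g : List α) (S : Finset β) (F : α → β → ℤ) :
    (g.map (fun e => ∑ a ∈ S, F e a)).sum = ∑ a ∈ S, (g.map (fun e => F e a)).sum := by
  induction g with
  | nil => simp
  | cons e g ih => simp [ih, Finset.sum_add_distrib]

lemma dist_cast (X : Finset (V × V)) (h fp : V → V → ℤ) :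
    (dist X h fp : ℤ) = ∑ a ∈ X, if h a.1 a.2 ≠ fp a.1 a.2 then (1:ℤ) else 0 := by
  rw [show dist X h fp = (X.filter fun e => h e.1 e.2 ≠ fp e.1 e.2).card from rfl,
    Finset.card_filter]
  push_cast
  apply Finset.sum_congr rfl
  intro a _
  split_ifs <;> simp

lemma cycleWeight_eq (X : Finset (V × V)) (f fp : V → V → ℤ) (g : List (V × V × Bool)) :
    cycleWeight X f fp g = ∑ a ∈ X, (g.map (fun e =>
      if arcOf e = a then (if f a.1 a.2 ≠ fp a.1 a.2 then (-1:ℤ) else 1) else 0)).sum := by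
  rw [cycleWeight, ← swap_sum]
  apply congrArg
  apply List.map_congr_left
  intro e _
  rw [Finset.sum_ite_eq]

lemma arc_indicator (e : V × V × Bool) (u v : V) (w : ℤ) :
    (if arcOf e = (u, v) then w else 0)
      = w * ((if e = (u, v, true) then (1:ℤ) else 0) + (if e = (v, u, false) then 1 else 0)) := by
  rcases e with ⟨x, y, b⟩
  cases b <;> simp [arcOf, Prod.ext_iff] <;> split_ifs <;> simp_all <;> ring

lemma W_eq (g : List (V × V × Bool)) (u v : V) (w : ℤ) :
    (g.map (fun e => if arcOf e = (u, v) then w else 0)).sum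
      = w * (cnt g (u, v, true) + cnt g (v, u, false)) := by
  induction g with
  | nil => simp [cnt]
  | cons e g ih =>
    rw [List.map_cons, List.sum_cons, ih, arc_indicator]
    simp only [cnt, List.map_cons, List.sum_cons]
    ring

lemma dist_push_le {c f fp : V → V → ℤ} {s t : V} {X : Finset (V × V)}
    (hf : IsZFlow c s t f) (hfp : IsZFlow c s t fp)
    (hXc : ∀ e ∈ X, c e.1 e.2 = 1) {g : List (V × V × Bool)}
    (hg : ResidualCycle c f g) :
    (dist X (push f g) fp : ℤ) ≤ dist X f fp + cycleWeight X f fp g := by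
  have hnd : g.Nodup := hg.2.1.of_map
  rw [dist_cast, dist_cast, cycleWeight_eq, ← Finset.sum_add_distrib]
  apply Finset.sum_le_sum
  rintro ⟨u, v⟩ ha
  rw [W_eq, cnt_ite hnd, cnt_ite hnd]
  dsimp only
  have hc1 : c u v = 1 := hXc (u, v) ha
  have h0 := hf.1 u v
  have h0' := hfp.1 u v
  have hc' := hfp.2.1 u v
  have hcf := hf.2.1 u v
  rw [hc1] at hc' hcf
  have hp := push_eq g f u v
  rw [map_contrib_sum, cnt_ite hnd, cnt_ite hnd] at hp
  have hlt : (u, v, true) ∈ g → f u v < 1 := by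
    intro h1; have := hg.2.2.2 _ h1; simpa [hc1] using this
  have hgt : (v, u, false) ∈ g → 0 < f u v := by
    intro h2; have := hg.2.2.2 _ h2; simpa using this
  by_cases h1 : (u, v, true) ∈ g <;> by_cases h2 : (v, u, false) ∈ g <;>
    simp only [h1, h2, if_true, if_false] at hp ⊢
  · exact absurd (hgt h2) (by have := hlt h1; omega)
  · have := hlt h1; split_ifs <;> omega
  · have := hgt h2; split_ifs <;> omega
  · split_ifs <;> omega

open Relation in
lemma exists_nodup_chain {α : Type*} {r : α → α → Prop} {a b : α}
    (h : ReflTransGen r a b) :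
    ∃ l : List α, l ≠ [] ∧ l.Nodup ∧ l.head? = some a ∧ l.getLast? = some b ∧ l.Chain' r := by
  classical
  induction h with
  | refl => exact ⟨[a], by simp, by simp, by simp, by simp, List.isChain_singleton a⟩
  | @tail b c hab hbc ih =>
    obtain ⟨l, hne, hnd, hh, hl, hch⟩ := ih
    by_cases hc : c ∈ l
    · obtain ⟨l₁, l₂, rfl⟩ := List.append_of_mem hc
      have hre : l₁ ++ c :: l₂ = (l₁ ++ [c]) ++ l₂ := by simp
      rw [hre] at hnd hh hch
      have hne' : l₁ ++ [c] ≠ [] := by simp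
      refine ⟨l₁ ++ [c], hne', (List.nodup_append.1 hnd).1, ?_, List.getLast?_concat, 
        hch.prefix ⟨l₂, rfl⟩⟩
      rw [List.head?_append, List.head?_eq_head hne'] at hh
      rw [List.head?_eq_head hne']
      simpa using hh
    · refine ⟨l ++ [c], by simp, ?_, ?_, List.getLast?_concat, ?_⟩
      · refine List.nodup_append.2 ⟨hnd, by simp, ?_⟩
        intro x hx y hxc hxy
        simp at hxc
        subst hxc hxy
        exact hc hx
      · rw [List.head?_append, hh]; rfl
      · refine List.isChain_append.2 ⟨hch, by simp, ?_⟩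
        intro x hx y hy
        rw [hl] at hx
        simp at hx hy
        subst hx; subst hy; exact hbc

lemma total_excess (h : V → V → ℤ) :
    ∑ v, ((∑ u, h v u) - (∑ u, h u v)) = 0 := by
  rw [Finset.sum_sub_distrib]
  rw [Finset.sum_comm (s := Finset.univ) (t := Finset.univ) (f := fun v u => h u v)]
  ring

lemma excess_all {c f f' : V → V → ℤ} {s t : V}
    (hf : IsZFlow c s t f) (hf' : IsZFlow c s t f')
    (hval : zvalue f' s = zvalue f s) (v : V) :
    (∑ u, f' v u) - (∑ u, f' u v) = (∑ u, f v u) - (∑ u, f u v) := by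
  have key : ∀ w, w ≠ t → (∑ u, f' w u) - (∑ u, f' u w) = (∑ u, f w u) - (∑ u, f u w) := by
    intro w hwt
    by_cases hws : w = s
    · subst hws; exact hval
    · rw [hf.2.2 w hws hwt, hf'.2.2 w hws hwt]; ring
  by_cases hvt : v = t
  · rw [hvt]
    have h1 := total_excess f
    have h2 := total_excess f'
    rw [← Finset.add_sum_erase _ _ (Finset.mem_univ t)] at h1 h2
    have h3 : ∑ x ∈ Finset.univ.erase t, ((∑ u, f' x u) - (∑ u, f' u x))
        = ∑ x ∈ Finset.univ.erase t, ((∑ u, f x u) - (∑ u, f u x)) := by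
      apply Finset.sum_congr rfl
      intro x hx
      exact key x (Finset.ne_of_mem_erase hx)
    linarith
  · exact key v hvt

open Relation in
lemma reach_back {φ : V → V → ℤ} (hcons : ∀ v, (∑ u, φ v u) = ∑ u, φ u v)
    {u₀ v₀ : V} (h : 0 < φ u₀ v₀ ∨ φ v₀ u₀ < 0) :
    ReflTransGen (fun x y => 0 < φ x y ∨ φ y x < 0) v₀ u₀ := by
  classical
  set r : V → V → Prop := fun x y => 0 < φ x y ∨ φ y x < 0 with hr
  by_contra hru
  set S : Finset V := Finset.univ.filter (fun x => ReflTransGen r v₀ x) with hS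
  have hv₀ : v₀ ∈ S := Finset.mem_filter.2 ⟨Finset.mem_univ _, ReflTransGen.refl⟩
  have hu₀ : u₀ ∉ S := by simp [hS, hru]
  have hclosed : ∀ x ∈ S, ∀ y, y ∉ S → ¬ r x y := by
    intro x hx y hy hrxy
    simp [hS] at hx hy
    exact hy (hx.tail hrxy)
  have hzero : (∑ v ∈ S, ∑ u ∈ Sᶜ, φ v u) - (∑ v ∈ S, ∑ u ∈ Sᶜ, φ u v) = 0 := by
    have h1 : ∑ v ∈ S, ((∑ u, φ v u) - (∑ u, φ u v)) = 0 :=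
      Finset.sum_eq_zero fun v _ => by rw [hcons v]; ring
    have h2 : ∀ v, (∑ u, φ v u) = (∑ u ∈ S, φ v u) + ∑ u ∈ Sᶜ, φ v u :=
      fun v => (Finset.sum_add_sum_compl S _).symm
    have h3 : ∀ v, (∑ u, φ u v) = (∑ u ∈ S, φ u v) + ∑ u ∈ Sᶜ, φ u v :=
      fun v => (Finset.sum_add_sum_compl S _).symm
    simp only [h2, h3, Finset.sum_sub_distrib, Finset.sum_add_distrib] at h1
    have h4 : ∑ v ∈ S, ∑ u ∈ S, φ v u = ∑ v ∈ S, ∑ u ∈ S, φ u v := Finset.sum_comm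
    linarith
  have hA : ∀ v ∈ S, ∀ u ∈ Sᶜ, φ v u ≤ 0 := by
    intro v hv u hu
    have := hclosed v hv u (by simpa using hu)
    simp [hr] at this
    exact this.1
  have hB : ∀ v ∈ S, ∀ u ∈ Sᶜ, 0 ≤ φ u v := by
    intro v hv u hu
    have := hclosed v hv u (by simpa using hu)
    simp [hr] at this
    exact this.2
  have hAs : ∑ v ∈ S, ∑ u ∈ Sᶜ, φ v u ≤ 0 :=
    Finset.sum_nonpos fun v hv => Finset.sum_nonpos fun u hu => hA v hv u hu
  have hBs : 0 ≤ ∑ v ∈ S, ∑ u ∈ Sᶜ, φ u v :=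
    Finset.sum_nonneg fun v hv => Finset.sum_nonneg fun u hu => hB v hv u hu
  have hA0 : ∑ v ∈ S, ∑ u ∈ Sᶜ, φ v u = 0 := by linarith
  have hB0 : ∑ v ∈ S, ∑ u ∈ Sᶜ, φ u v = 0 := by linarith
  have hu₀c : u₀ ∈ Sᶜ := by simpa using hu₀
  rcases h with h | h
  · have := (Finset.sum_eq_zero_iff_of_nonneg
        (fun v hv => Finset.sum_nonneg fun u hu => hB v hv u hu)).1 hB0 v₀ hv₀
    have := (Finset.sum_eq_zero_iff_of_nonneg (fun u hu => hB v₀ hv₀ u hu)).1 this u₀ hu₀c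
    omega
  · have := (Finset.sum_eq_zero_iff_of_nonpos
        (fun v hv => Finset.sum_nonpos fun u hu => hA v hv u hu)).1 hA0 v₀ hv₀
    have := (Finset.sum_eq_zero_iff_of_nonpos (fun u hu => hA v₀ hv₀ u hu)).1 this u₀ hu₀c
    omega

lemma list_sum_nonpos (L : List ℤ) (h : ∀ x ∈ L, x ≤ 0) : L.sum ≤ 0 := by
  induction L with
  | nil => simp
  | cons a L ih =>
    simp only [List.sum_cons]
    have := h a (by simp)
    have := ih (fun x hx => h x (by simp [hx]))
    omega

lemma list_sum_le_of_mem (L : List ℤ) (h : ∀ x ∈ L, x ≤ 0) {x : ℤ} (hx : x ∈ L) :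
    L.sum ≤ x := by
  induction L with
  | nil => simp at hx
  | cons a L ih =>
    simp only [List.sum_cons]
    rcases List.mem_cons.1 hx with rfl | hx
    · have := list_sum_nonpos L (fun y hy => h y (by simp [hy])); omega
    · have := ih (fun y hy => h y (by simp [hy])) hx
      have := h a (by simp)
      omega

lemma zip_get {α β : Type*} (mk : α → α → β) (l : List α) (i : ℕ) (hi : i < l.length)
    (hl : 0 < l.length) :
    (List.zipWith mk l (l.rotate 1)).get ⟨i, by simp; omega⟩
      = mk (l.get ⟨i, hi⟩) (l.get ⟨(i + 1) % l.length, Nat.mod_lt _ hl⟩) := by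
  rw [List.get_eq_getElem, List.getElem_zipWith]
  congr 1
  rw [List.getElem_rotate]; rfl

open Relation in
lemma exists_neg_cycle {c f f' : V → V → ℤ} {s t : V} {X : Finset (V × V)}
    (hf : IsZFlow c s t f) (hf' : IsZFlow c s t f')
    (hval : zvalue f' s = zvalue f s)
    (hXc : ∀ e ∈ X, c e.1 e.2 = 1)
    {p q : V} (hpq : (p, q) ∈ X) (hne : f p q ≠ f' p q) :
    ∃ g, ResidualCycle c f g ∧ cycleWeight X f f' g < 0 := by
  classical
  set φ : V → V → ℤ := fun x y => f' x y - f x y with hφ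
  have hcons : ∀ v, (∑ u, φ v u) = ∑ u, φ u v := by
    intro v
    have := excess_all hf hf' hval v
    simp only [hφ, Finset.sum_sub_distrib]
    linarith
  obtain ⟨u₀, v₀, cs, hruv, hcs1, hcs21, hcsres, hcsX, hcsne⟩ :
      ∃ (u₀ v₀ : V) (cs : V × V × Bool), (0 < φ u₀ v₀ ∨ φ v₀ u₀ < 0) ∧ cs.1 = u₀ ∧ cs.2.1 = v₀ ∧
        (if cs.2.2 then f cs.1 cs.2.1 < c cs.1 cs.2.1 else 0 < f cs.2.1 cs.1) ∧
        arcOf cs ∈ X ∧ f (arcOf cs).1 (arcOf cs).2 ≠ f' (arcOf cs).1 (arcOf cs).2 := by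
    rcases lt_or_gt_of_ne hne with h | h
    · refine ⟨p, q, (p, q, true), Or.inl (by simp [hφ]; omega), rfl, rfl, ?_, ?_, ?_⟩
      · simpa using h.trans_le (hf'.2.1 p q)
      · simpa [arcOf] using hpq
      · simpa [arcOf] using hne
    · refine ⟨q, p, (q, p, false), Or.inr (by simp [hφ]; omega), rfl, rfl, ?_, ?_, ?_⟩
      · have := hf'.1 p q; simpa using by omega
      · simpa [arcOf] using hpq
      · simpa [arcOf] using hne
  have hreach : ReflTransGen (fun x y => 0 < φ x y ∨ φ y x < 0) v₀ u₀ :=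
    reach_back hcons hruv
  obtain ⟨l, hlne, hlnd, hlh, hll, hlch⟩ := exists_nodup_chain hreach
  have hnpos : 0 < l.length := List.length_pos_iff.2 hlne
  set n := l.length with hn
  have hget0 : l.get ⟨0, hnpos⟩ = v₀ := by
    rw [List.get_mk_zero]
    rw [List.head?_eq_head hlne] at hlh
    exact Option.some_injective _ hlh
  have hgetlast : l.get ⟨n - 1, by omega⟩ = u₀ := by
    simp only [List.get_eq_getElem, hn]; rw [← List.getLast_eq_getElem hlne]
    rw [List.getLast?_eq_getLast hlne] at hll
    exact Option.some_injective _ hll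
  set mk : V → V → V × V × Bool :=
    fun x y => if x = u₀ then cs else (x, y, decide (f x y < f' x y)) with hmk
  set g : List (V × V × Bool) := List.zipWith mk l (l.rotate 1) with hgdef
  have hglen : g.length = n := by simp [hgdef, hn]
  have hgget : ∀ (i : ℕ) (hi : i < n), g.get ⟨i, by omega⟩
      = mk (l.get ⟨i, hi⟩) (l.get ⟨(i + 1) % n, Nat.mod_lt _ hnpos⟩) := by
    intro i hi
    exact zip_get mk l i hi hnpos
  have hidx : ∀ (i : ℕ) (hi : i < n), l.get ⟨i, hi⟩ = u₀ → i = n - 1 := by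
    intro i hi h
    have : l.get ⟨i, hi⟩ = l.get ⟨n - 1, by omega⟩ := by rw [h, hgetlast]
    have := (hlnd.get_inj_iff).1 this
    simpa using congrArg Fin.val this
  have hstart : ∀ (i : ℕ) (hi : i < n), (g.get ⟨i, by omega⟩).1 = l.get ⟨i, hi⟩ := by
    intro i hi
    rw [hgget i hi]
    simp only [hmk]
    split_ifs with h
    · rw [hcs1, h]
    · rfl
  have hhead : ∀ (i : ℕ) (hi : i < n),
      (g.get ⟨i, by omega⟩).2.1 = l.get ⟨(i + 1) % n, Nat.mod_lt _ hnpos⟩ := by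
    intro i hi
    rw [hgget i hi]
    simp only [hmk]
    split_ifs with h
    · have hi1 : i = n - 1 := hidx i hi h
      have hmod : (i + 1) % n = 0 := by
        rw [hi1, Nat.sub_add_cancel (by omega), Nat.mod_self]
      rw [hcs21]
      have heq : l.get ⟨(i + 1) % n, Nat.mod_lt _ hnpos⟩ = l.get ⟨0, hnpos⟩ := by
        congr 1
        simp [hmod]
      rw [heq, hget0]
    · rfl
  have hcase : ∀ (i : ℕ) (hi : i < n), g.get ⟨i, by omega⟩ = cs ∨
      (∃ x y, g.get ⟨i, by omega⟩ = (x, y, true) ∧ f x y < f' x y) ∨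
      (∃ x y, g.get ⟨i, by omega⟩ = (x, y, false) ∧ f' y x < f y x) := by
    intro i hi
    rw [hgget i hi]
    simp only [hmk]
    split_ifs with h
    · left; rfl
    · right
      have hin : i < n - 1 := by
        rcases Nat.lt_or_ge i (n - 1) with h' | h'
        · exact h'
        · exfalso
          apply h
          have hieq : i = n - 1 := by omega
          have hfe : (⟨i, hi⟩ : Fin l.length) = ⟨n - 1, by omega⟩ := Fin.ext hieq
          rw [hfe, hgetlast]
      have hmod : (i + 1) % n = i + 1 := Nat.mod_eq_of_lt (by omega)
      have hrxy : 0 < φ (l.get ⟨i, hi⟩) (l.get ⟨(i + 1) % n, Nat.mod_lt _ hnpos⟩) ∨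
          φ (l.get ⟨(i + 1) % n, Nat.mod_lt _ hnpos⟩) (l.get ⟨i, hi⟩) < 0 := by
        have := List.isChain_iff_getElem.1 hlch i (by omega)
        convert this using 3 <;> simp [hmod]
      set x := l.get ⟨i, hi⟩
      set y := l.get ⟨(i + 1) % n, Nat.mod_lt _ hnpos⟩
      by_cases hfwd : f x y < f' x y
      · exact Or.inl ⟨x, y, by simp [hfwd], hfwd⟩
      · refine Or.inr ⟨x, y, by simp [hfwd], ?_⟩
        rcases hrxy with h' | h' <;> simp only [hφ] at h' <;> omega
  have hcsmem : cs ∈ g := by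
    have := hgget (n - 1) (by omega)
    rw [hgetlast] at this
    simp only [hmk, if_pos rfl] at this
    rw [← this]
    exact List.get_mem _ _
  refine ⟨g, ⟨?_, ?_, ?_, ?_⟩, ?_⟩
  · intro h; rw [h] at hglen; simp at hglen; omega
  · have : g.map (fun e => e.1) = l := by
      apply List.ext_get
      · simp [hglen, hn]
      · intro i h1 h2
        rw [List.get_eq_getElem (l := List.map _ g), List.getElem_map, ← List.get_eq_getElem (l := g) (i := ⟨i, by simpa using h1⟩)]
        exact hstart i (by simpa [hglen] using h2)
    rw [this]; exact hlnd
  · intro i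
    obtain ⟨i, hig⟩ := i
    have hi : i < n := by omega
    have h1 : (i + 1) % g.length = (i + 1) % n := by rw [hglen]
    have lhs := hhead i hi
    have rhs := hstart ((i + 1) % n) (Nat.mod_lt _ hnpos)
    simp only [h1]
    rw [lhs, rhs]
  · intro e he
    obtain ⟨⟨i, hig⟩, rfl⟩ := List.mem_iff_get.1 he
    have hi : i < n := by omega
    rcases hcase i hi with h | ⟨x, y, h, hlt⟩ | ⟨x, y, h, hlt⟩
    · rw [h]; exact hcsres
    · rw [h]; simpa using hlt.trans_le (hf'.2.1 x y)
    · rw [h]; have := hf'.1 y x; simpa using by omega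
  · rw [cycleWeight]
    have hterm : ∀ z ∈ g.map (fun e =>
        if arcOf e ∈ X then
          (if f (arcOf e).1 (arcOf e).2 ≠ f' (arcOf e).1 (arcOf e).2 then (-1 : ℤ) else 1)
        else 0), z ≤ 0 := by
      intro z hz
      obtain ⟨e, he, rfl⟩ := List.mem_map.1 hz
      obtain ⟨⟨i, hig⟩, rfl⟩ := List.mem_iff_get.1 he
      have hi : i < n := by omega
      rcases hcase i hi with h | ⟨x, y, h, hlt⟩ | ⟨x, y, h, hlt⟩
      · rw [h]; simp [hcsX, hcsne]
      · rw [h]; simp [arcOf]; split_ifs <;> omega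
      · rw [h]; simp [arcOf]; split_ifs <;> omega
    have hcsterm : (-1 : ℤ) ∈ g.map (fun e =>
        if arcOf e ∈ X then
          (if f (arcOf e).1 (arcOf e).2 ≠ f' (arcOf e).1 (arcOf e).2 then (-1 : ℤ) else 1)
        else 0) := by
      refine List.mem_map.2 ⟨cs, hcsmem, ?_⟩
      simp [hcsX, hcsne]
    have := list_sum_le_of_mem _ hterm hcsterm
    omega

/-- repeatedly augmenting a maximal flow along negative-weight residual
cycles terminates after at most `d(f₀, f') ≤ 2 ρ_N P` iterations, at a maximal flow
minimizing the transfer distance `d(·, f')` over all maximal flows. -/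
theorem stmt11 (s t : V) (c f' : V → V → ℤ) (X : Finset (V × V)) (rN Pn : ℕ)
    (hX : ∀ e ∈ X, c e.1 e.2 = 1) (hXcard : X.card ≤ 2 * rN * Pn)
    (hf' : IsZMaxFlow c s t f')
    (F : ℕ → V → V → ℤ) (hF0 : IsZMaxFlow c s t (F 0))
    (hstep : ∀ i, (∃ g, ResidualCycle c (F i) g ∧ cycleWeight X (F i) f' g < 0) →
      ∃ g, ResidualCycle c (F i) g ∧ cycleWeight X (F i) f' g < 0 ∧
        F (i + 1) = push (F i) g)
    (hstop : ∀ i, ¬ (∃ g, ResidualCycle c (F i) g ∧ cycleWeight X (F i) f' g < 0) →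
      F (i + 1) = F i) :
    dist X (F 0) f' ≤ 2 * rN * Pn ∧
      ∃ k ≤ dist X (F 0) f',
        (¬ ∃ g, ResidualCycle c (F k) g ∧ cycleWeight X (F k) f' g < 0) ∧
        IsZMaxFlow c s t (F k) ∧
        ∀ h : V → V → ℤ, IsZMaxFlow c s t h → dist X (F k) f' ≤ dist X h f' := by
  have hd0 : dist X (F 0) f' ≤ X.card := Finset.card_filter_le _ _
  refine ⟨hd0.trans hXcard, ?_⟩
  have hmax : ∀ i, IsZMaxFlow c s t (F i) := by
    intro i
    induction i with
    | zero => exact hF0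
    | succ i ih =>
      by_cases h : ∃ g, ResidualCycle c (F i) g ∧ cycleWeight X (F i) f' g < 0
      · obtain ⟨g, hg, hw, heq⟩ := hstep i h
        rw [heq]; exact max_push ih hg
      · rw [hstop i h]; exact ih
  have hdec : ∀ i, (∃ g, ResidualCycle c (F i) g ∧ cycleWeight X (F i) f' g < 0) →
      dist X (F (i + 1)) f' < dist X (F i) f' := by
    intro i h
    obtain ⟨g, hg, hw, heq⟩ := hstep i h
    have hle := dist_push_le (hmax i).1 hf'.1 hX hg
    rw [← heq] at hle
    have : (dist X (F (i + 1)) f' : ℤ) < dist X (F i) f' := by omega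
    exact_mod_cast this
  have hex : ∃ k ≤ dist X (F 0) f',
      ¬ (∃ g, ResidualCycle c (F k) g ∧ cycleWeight X (F k) f' g < 0) := by
    by_contra hcon
    push_neg at hcon
    have hmono : ∀ i, i ≤ dist X (F 0) f' + 1 → dist X (F i) f' + i ≤ dist X (F 0) f' := by
      intro i
      induction i with
      | zero => simp
      | succ i ih =>
        intro hi
        have h1 := ih (by omega)
        have h2 := hdec i (hcon i (by omega))
        omega
    have := hmono (dist X (F 0) f' + 1) le_rfl
    omega
  obtain ⟨k, hk, hnc⟩ := hex
  refine ⟨k, hk, hnc, hmax k, ?_⟩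
  have hzero : dist X (F k) f' = 0 := by
    by_contra h0
    have hpos : 0 < (X.filter fun e => F k e.1 e.2 ≠ f' e.1 e.2).card := by
      rw [show dist X (F k) f' = (X.filter fun e => F k e.1 e.2 ≠ f' e.1 e.2).card from rfl] at h0
      omega
    obtain ⟨⟨p, q⟩, hmem⟩ := Finset.card_pos.1 hpos
    have hpq := Finset.mem_filter.1 hmem
    have hval : zvalue f' s = zvalue (F k) s :=
      le_antisymm ((hmax k).2 f' hf'.1) (hf'.2 _ (hmax k).1)
    exact hnc (exists_neg_cycle (hmax k).1 hf'.1 hval hX hpq.1 hpq.2)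
  intro h hh
  rw [hzero]
  exact Nat.zero_le _
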